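/- Let G be a topological group, U a symmetric open neighborhood of the identity, C a regular compact set (C = cl(int C)) whose interior C₀ is U-connected, and A ⊆ G with A ∩ C₀ ≠ ∅ and C \ cl(A) ≠ ∅. Then, with ν a Haar measure on G, ν(cl(A) ∩ C) < ν(A·U ∩ C). -/

import Mathlib

open MeasureTheory Set Pointwise

theorem stmt_14 {G : Type*} [Group G] [TopologicalSpace G] [IsTopologicalGroup G]
    [LocallyCompactSpace G] [MeasurableSpace G] [BorelSpace G]
    (ν : Measure G) [ν.IsHaarMeasure]
    (U : Set G) (hUopen : IsOpen U) (hUone : (1 : G) ∈ U) (hUsymm : U⁻¹ = U)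
    (C : Set G) (hCcomp : IsCompact C) (hCreg : C = closure (interior C))
    (hconn : ¬ ∃ A : Set G, A ≠ ∅ ∧ A ≠ interior C ∧ A * U ∩ interior C = A)
    (A : Set G) (hA : (A ∩ interior C).Nonempty) (hA' : (C \ closure A).Nonempty) :
    ν (closure A ∩ C) < ν (A * U ∩ C) := by
  -- closure A ⊆ A * U
  have h1 : closure A ⊆ A * U := by
    intro x hx
    have hxmem : x ∈ x • U := by
      refine ⟨1, hUone, mul_one x⟩
    obtain ⟨a, haU, haA⟩ := mem_closure_iff.mp hx (x • U) (hUopen.smul x) hxmem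
    obtain ⟨u, huU, hau⟩ := haU
    have hu' : u⁻¹ ∈ U := by
      rw [← hUsymm]; exact Set.inv_mem_inv.mpr huU
    have : x = a * u⁻¹ := by
      rw [← hau]; simp [smul_eq_mul]
    rw [this]
    exact mul_mem_mul haA hu'
  -- closure A * U ⊆ closure (A * U), pointwise
  have h2 : ∀ b ∈ closure A, ∀ u ∈ U, b * u ∈ closure (A * U) := by
    intro b hb u huU
    have himg : (· * u) '' closure A ⊆ closure ((· * u) '' A) :=
      image_closure_subset_closure_image (continuous_mul_right u)
    have : b * u ∈ closure ((· * u) '' A) := himg ⟨b, hb, rfl⟩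
    refine closure_mono ?_ this
    rintro _ ⟨a, ha, rfl⟩
    exact mul_mem_mul ha huU
  -- the key nonemptiness
  have hW : ((A * U ∩ interior C) \ closure A).Nonempty := by
    by_contra h
    rw [Set.not_nonempty_iff_eq_empty, Set.diff_eq_empty] at h
    apply hconn
    refine ⟨closure A ∩ interior C, ?_, ?_, ?_⟩
    · obtain ⟨a, haA, haC⟩ := hA
      exact Set.nonempty_iff_ne_empty.mp ⟨a, subset_closure haA, haC⟩
    · -- there is a point of interior C not in closure A
      obtain ⟨c, hcC, hcA⟩ := hA'
      have hc' : c ∈ closure (interior C) := hCreg ▸ hcC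
      obtain ⟨p, hpO, hpC⟩ := mem_closure_iff.mp hc' (closure A)ᶜ
        isClosed_closure.isOpen_compl hcA
      intro heq
      rw [← heq] at hpC
      exact hpO hpC.1
    · apply Set.Subset.antisymm
      · rintro x ⟨hxBU, hxC⟩
        refine ⟨?_, hxC⟩
        obtain ⟨b, ⟨hbA, hbC⟩, u, huU, rfl⟩ := hxBU
        have hx1 : b * u ∈ closure (A * U) := h2 b hbA u huU
        have hx2 : b * u ∈ interior C ∩ closure (A * U) := ⟨hxC, hx1⟩
        have hx3 : b * u ∈ closure (interior C ∩ (A * U)) :=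
          isOpen_interior.inter_closure hx2
        have hx4 : b * u ∈ closure (closure A) := by
          refine closure_mono ?_ hx3
          rintro y ⟨hyC, hyAU⟩
          exact h ⟨hyAU, hyC⟩
        rwa [closure_closure] at hx4
      · rintro x ⟨hxA, hxC⟩
        exact ⟨⟨x, ⟨hxA, hxC⟩, 1, hUone, mul_one x⟩, hxC⟩
  -- W is open
  have hWopen : IsOpen ((A * U ∩ interior C) \ closure A) :=
    ((hUopen.mul_left).inter isOpen_interior).sdiff isClosed_closure
  have hWpos : 0 < ν ((A * U ∩ interior C) \ closure A) := hWopen.measure_pos ν hW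
  have hdisj : Disjoint (closure A ∩ C) ((A * U ∩ interior C) \ closure A) := by
    refine Set.disjoint_left.mpr ?_
    rintro x ⟨hx1, _⟩ ⟨_, hx2⟩
    exact hx2 hx1
  have hWmeas : MeasurableSet ((A * U ∩ interior C) \ closure A) := hWopen.measurableSet
  have hfin : ν (closure A ∩ C) ≠ ⊤ := by
    refine ne_of_lt (lt_of_le_of_lt (measure_mono Set.inter_subset_right) ?_)
    exact hCcomp.measure_lt_top
  calc ν (closure A ∩ C) < ν (closure A ∩ C) + ν ((A * U ∩ interior C) \ closure A) :=
        ENNReal.lt_add_right hfin (ne_of_gt hWpos)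
    _ = ν ((closure A ∩ C) ∪ ((A * U ∩ interior C) \ closure A)) :=
        (measure_union hdisj hWmeas).symm
    _ ≤ ν (A * U ∩ C) := by
        refine measure_mono ?_
        rintro x (⟨hx1, hx2⟩ | ⟨⟨hx1, hx2⟩, _⟩)
        · exact ⟨h1 hx1, hx2⟩
        · exact ⟨hx1, interior_subset hx2⟩
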